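/- arXiv:2007.07575 — 10 statements merged into one kernel-verified Lean document; each statement's English description precedes it below -/
import Mathlib

section
/- The domination relation on antichains of a finite DAG is antisymmetric: if A and B are antichains of the same size such that A dominates B and B dominates A, then A = B. -/
open Relation

/-- A directed graph (edge relation `E`) is acyclic. -/
def Acyclic {V : Type*} (E : V → V → Prop) : Prop := ∀ v, ¬ TransGen E v v

/-- `A` is an antichain: its vertices are pairwise non-reachable
(reachability = reflexive-transitive closure of `E`). -/
def IsAC {V : Type*} (E : V → V → Prop) (A : Finset V) : Prop :=
  ∀ a ∈ A, ∀ b ∈ A, a ≠ b → ¬ ReflTransGen E a b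

/-- `B` dominates `A`: same size, and every vertex of `B` is reachable from some vertex of `A`. -/
def Dom {V : Type*} (E : V → V → Prop) (B A : Finset V) : Prop :=
  B.card = A.card ∧ ∀ b ∈ B, ∃ a ∈ A, ReflTransGen E a b

/-- A frontier antichain: an antichain not dominated by any other antichain. -/
def Frontier {V : Type*} (E : V → V → Prop) (A : Finset V) : Prop :=
  IsAC E A ∧ ∀ B : Finset V, IsAC E B → B ≠ A → ¬ Dom E B A

/-- The identity order on `Fin n` is a topological order for `E`. -/
def Topo {n : ℕ} (E : Fin n → Fin n → Prop) : Prop := ∀ u v, E u v → (u : ℕ) < (v : ℕ)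

/-- The edge relation of the induced subgraph `G_i` on the first `i` vertices. -/
def Erest {n : ℕ} (E : Fin n → Fin n → Prop) (i : ℕ) (u v : Fin n) : Prop :=
  E u v ∧ (u : ℕ) < i ∧ (v : ℕ) < i

/-- `A` is a frontier antichain of the induced subgraph `G_i` on the first `i` vertices. -/
def FrontierIn {n : ℕ} (E : Fin n → Fin n → Prop) (i : ℕ) (A : Finset (Fin n)) : Prop :=
  (∀ a ∈ A, (a : ℕ) < i) ∧ IsAC (Erest E i) A ∧
  ∀ B : Finset (Fin n), (∀ b ∈ B, (b : ℕ) < i) → IsAC (Erest E i) B → B ≠ A →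
    ¬ Dom (Erest E i) B A

/-- The support `S_i`: union of all frontier antichains of `G_i`. -/
def SupportIn {n : ℕ} (E : Fin n → Fin n → Prop) (i : ℕ) : Set (Fin n) :=
  {v | ∃ A : Finset (Fin n), FrontierIn E i A ∧ v ∈ A}

/-- domination is antisymmetric on antichains of a finite DAG. -/
theorem domination_antisymm {V : Type*} [Fintype V] (E : V → V → Prop) (hE : Acyclic E)
    (A B : Finset V) (hA : IsAC E A) (hB : IsAC E B)
    (h1 : Dom E A B) (h2 : Dom E B A) : A = B := by
  have antisymm : ∀ x y, ReflTransGen E x y → ReflTransGen E y x → x = y := by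
    intro x y hxy hyx
    by_contra hne
    exact hE y (TransGen.trans_right hyx
      ((reflTransGen_iff_eq_or_transGen.mp hxy).resolve_left (fun h => hne h.symm)))
  have hsub : A ⊆ B := by
    intro a ha
    obtain ⟨b, hb, hba⟩ := h1.2 a ha
    obtain ⟨a', ha', ha'b⟩ := h2.2 b hb
    have haa' : a' = a := by
      by_contra hne
      exact hA a' ha' a ha hne (ha'b.trans hba)
    subst haa'
    have : a' = b := antisymm a' b ha'b hba
    rwa [this]
  exact Finset.eq_of_subset_of_card_le hsub (le_of_eq h2.1)
end

section
/- The domination relation restricted to antichains of a fixed size n in a finite DAG is a partial order (reflexive, transitive, and antisymmetric). -/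
open Relation

/-- domination on antichains of a fixed size `m` is a partial order. -/
theorem domination_partial_order {V : Type*} [Fintype V] (E : V → V → Prop)
    (hE : Acyclic E) (m : ℕ) :
    (∀ A : Finset V, IsAC E A → A.card = m → Dom E A A) ∧
    (∀ A B C : Finset V, IsAC E A → IsAC E B → IsAC E C →
      A.card = m → B.card = m → C.card = m →
      Dom E C B → Dom E B A → Dom E C A) ∧
    (∀ A B : Finset V, IsAC E A → IsAC E B → A.card = m → B.card = m →
      Dom E A B → Dom E B A → A = B) := by
  refine ⟨fun A _ _ => ⟨rfl, fun b hb => ⟨b, hb, ReflTransGen.refl⟩⟩, ?_, ?_⟩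
  · rintro A B C _ _ _ hA hB hC ⟨hcard1, h1⟩ ⟨hcard2, h2⟩
    refine ⟨by omega, fun c hc => ?_⟩
    obtain ⟨b, hb, hbc⟩ := h1 c hc
    obtain ⟨a, ha, hab⟩ := h2 b hb
    exact ⟨a, ha, hab.trans hbc⟩
  · rintro A B hACA hACB hA hB ⟨hcard1, h1⟩ ⟨_, h2⟩
    have hsub : A ⊆ B := by
      intro a ha
      obtain ⟨b, hb, hba⟩ := h1 a ha
      obtain ⟨a', ha', ha'b⟩ := h2 b hb
      have haa : a' = a := by
        by_contra hne
        exact hACA a' ha' a ha hne (ha'b.trans hba)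
      rw [haa] at ha'b
      have hab : a = b := by
        by_contra hne
        rcases (reflTransGen_iff_eq_or_transGen.mp ha'b) with h | h
        · exact hne h.symm
        · exact hE a (TransGen.trans_left h hba)
      exact hab ▸ hb
    exact Finset.eq_of_subset_of_card_le hsub (by omega)
end

section
/- If a DAG G of width k has a path cover P_1, ..., P_k of size k, then for every subset S of {1,...,k}, there is at most one frontier antichain of size |S| whose vertices lie exactly one on each path P_i with i in S. Consequently, G has at most 2^k frontier antichains. -/
open Relation

lemma antisymm_of_acyclic {V : Type*} {E : V → V → Prop} (hE : Acyclic E) {a b : V}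
    (h1 : ReflTransGen E a b) (h2 : ReflTransGen E b a) : a = b := by
  by_contra hne
  rcases (Relation.reflTransGen_iff_eq_or_transGen.mp h1) with rfl | h1'
  · exact hne rfl
  rcases (Relation.reflTransGen_iff_eq_or_transGen.mp h2) with rfl | h2'
  · exact hne rfl
  exact hE a (h1'.trans h2')

lemma chain'_reach_of_le {V : Type*} {E : V → V → Prop} (l : List V) (hl : l.Chain' E)
    (m n : ℕ) (hm : m < l.length) (hn : n < l.length) (hmn : m ≤ n) :
    ReflTransGen E (l.get ⟨m, hm⟩) (l.get ⟨n, hn⟩) := by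
  induction n, hmn using Nat.le_induction with
  | base => exact ReflTransGen.refl
  | succ n hn' ih =>
    have hnl : n < l.length := by omega
    exact (ih hnl).tail (List.isChain_iff_getElem.mp hl n (by omega))

lemma chain'_comparable {V : Type*} {E : V → V → Prop} {l : List V} (hl : l.Chain' E)
    {a b : V} (ha : a ∈ l) (hb : b ∈ l) : ReflTransGen E a b ∨ ReflTransGen E b a := by
  obtain ⟨⟨m, hm⟩, rfl⟩ := List.mem_iff_get.mp ha
  obtain ⟨⟨n, hn⟩, rfl⟩ := List.mem_iff_get.mp hb
  rcases le_total m n with h | h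
  · exact Or.inl (chain'_reach_of_le l hl m n hm hn h)
  · exact Or.inr (chain'_reach_of_le l hl n m hn hm h)

lemma reach_eq_of_ac {V : Type*} {E : V → V → Prop} {A : Finset V} (h : IsAC E A)
    {x y : V} (hx : x ∈ A) (hy : y ∈ A) (hr : ReflTransGen E x y) : x = y := by
  by_contra hne
  exact h x hx y hy hne hr

/-- for each subset `S` of the paths of a path cover of size `k`,
there is at most one frontier antichain with exactly one vertex on each path of `S`;
consequently there are at most `2^k` frontier antichains. -/
theorem frontier_per_path_subset {V : Type*} [Fintype V] [DecidableEq V]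
    (E : V → V → Prop) (hE : Acyclic E) (k : ℕ) (P : Fin k → List V)
    (hchain : ∀ i, (P i).Chain' E)
    (hcover : ∀ v : V, ∃ i, v ∈ P i) :
    (∀ S : Finset (Fin k), ∀ A B : Finset V, Frontier E A → Frontier E B →
      (∃ f : V → Fin k, (∀ a ∈ A, f a ∈ S ∧ a ∈ P (f a)) ∧
        (∀ a ∈ A, ∀ a' ∈ A, f a = f a' → a = a') ∧ (∀ i ∈ S, ∃ a ∈ A, f a = i)) →
      (∃ g : V → Fin k, (∀ b ∈ B, g b ∈ S ∧ b ∈ P (g b)) ∧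
        (∀ b ∈ B, ∀ b' ∈ B, g b = g b' → b = b') ∧ (∀ i ∈ S, ∃ b ∈ B, g b = i)) →
      A = B) ∧
    {A : Finset V | Frontier E A}.ncard ≤ 2 ^ k := by
  classical
  have main : ∀ S : Finset (Fin k), ∀ A B : Finset V, Frontier E A → Frontier E B →
      (∃ f : V → Fin k, (∀ a ∈ A, f a ∈ S ∧ a ∈ P (f a)) ∧
        (∀ a ∈ A, ∀ a' ∈ A, f a = f a' → a = a') ∧ (∀ i ∈ S, ∃ a ∈ A, f a = i)) →
      (∃ g : V → Fin k, (∀ b ∈ B, g b ∈ S ∧ b ∈ P (g b)) ∧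
        (∀ b ∈ B, ∀ b' ∈ B, g b = g b' → b = b') ∧ (∀ i ∈ S, ∃ b ∈ B, g b = i)) →
      A = B := by
    rintro S A B hA hB ⟨f, hf1, hf2, hf3⟩ ⟨g, hg1, hg2, hg3⟩
    choose a haA haf using hf3
    choose b hbB hbg using hg3
    have haP : ∀ i hi, a i hi ∈ P i := by
      intro i hi
      have := (hf1 _ (haA i hi)).2
      rwa [haf i hi] at this
    have hbP : ∀ i hi, b i hi ∈ P i := by
      intro i hi
      have := (hg1 _ (hbB i hi)).2
      rwa [hbg i hi] at this
    set c : (i : Fin k) → i ∈ S → V := fun i hi =>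
      if ReflTransGen E (a i hi) (b i hi) then b i hi else a i hi with hc
    have hac : ∀ i hi, ReflTransGen E (a i hi) (c i hi) := by
      intro i hi
      simp only [hc]
      split
      · next h => exact h
      · exact ReflTransGen.refl
    have hbc : ∀ i hi, ReflTransGen E (b i hi) (c i hi) := by
      intro i hi
      simp only [hc]
      split
      · exact ReflTransGen.refl
      · next h =>
          rcases chain'_comparable (hchain i) (haP i hi) (hbP i hi) with h' | h'
          · exact absurd h' h
          · exact h'
    have hmem : ∀ i hi, c i hi = a i hi ∨ c i hi = b i hi := by
      intro i hi
      simp only [hc]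
      split
      · exact Or.inr rfl
      · exact Or.inl rfl
    -- key step: a common dominating antichain C
    set C : Finset V := S.attach.image (fun i => c i.1 i.2) with hC
    have hinj : ∀ i hi j hj, c i hi = c j hj → i = j := by
      intro i hi j hj hcc
      rcases hmem j hj with hj' | hj'
      · have h1 : ReflTransGen E (a i hi) (a j hj) := by
          rw [← hj', ← hcc]; exact hac i hi
        have h2 := reach_eq_of_ac hA.1 (haA i hi) (haA j hj) h1
        rw [← haf i hi, ← haf j hj, h2]
      · have h1 : ReflTransGen E (b i hi) (b j hj) := by
          rw [← hj', ← hcc]; exact hbc i hi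
        have h2 := reach_eq_of_ac hB.1 (hbB i hi) (hbB j hj) h1
        rw [← hbg i hi, ← hbg j hj, h2]
    have hCcard : C.card = S.card := by
      rw [hC, Finset.card_image_of_injOn, Finset.card_attach]
      intro ⟨i, hi⟩ _ ⟨j, hj⟩ _ h
      exact Subtype.ext (hinj i hi j hj h)
    have hAcard : A.card = S.card :=
      Finset.card_bij (fun a _ => f a) (fun a ha => (hf1 a ha).1)
        (fun a ha a' ha' h => hf2 a ha a' ha' h)
        (fun i hi => ⟨a i hi, haA i hi, haf i hi⟩)
    have hBcard : B.card = S.card :=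
      Finset.card_bij (fun b _ => g b) (fun b hb => (hg1 b hb).1)
        (fun b hb b' hb' h => hg2 b hb b' hb' h)
        (fun i hi => ⟨b i hi, hbB i hi, hbg i hi⟩)
    have hCAC : IsAC E C := by
      intro x hx y hy hne hr
      obtain ⟨⟨i, hi⟩, -, rfl⟩ := Finset.mem_image.mp hx
      obtain ⟨⟨j, hj⟩, -, rfl⟩ := Finset.mem_image.mp hy
      rcases hmem j hj with hj' | hj'
      · have h1 : ReflTransGen E (a i hi) (a j hj) := (hac i hi).trans (hj' ▸ hr)
        have h2 := reach_eq_of_ac hA.1 (haA i hi) (haA j hj) h1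
        have h3 : ReflTransGen E (a j hj) (c i hi) := h2 ▸ hac i hi
        exact hne ((antisymm_of_acyclic hE (hj' ▸ hr) h3).trans hj'.symm)
      · have h1 : ReflTransGen E (b i hi) (b j hj) := (hbc i hi).trans (hj' ▸ hr)
        have h2 := reach_eq_of_ac hB.1 (hbB i hi) (hbB j hj) h1
        have h3 : ReflTransGen E (b j hj) (c i hi) := h2 ▸ hbc i hi
        exact hne ((antisymm_of_acyclic hE (hj' ▸ hr) h3).trans hj'.symm)
    have hDomA : Dom E C A := by
      refine ⟨hCcard.trans hAcard.symm, ?_⟩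
      intro v hv
      obtain ⟨⟨i, hi⟩, -, rfl⟩ := Finset.mem_image.mp hv
      exact ⟨a i hi, haA i hi, hac i hi⟩
    have hDomB : Dom E C B := by
      refine ⟨hCcard.trans hBcard.symm, ?_⟩
      intro v hv
      obtain ⟨⟨i, hi⟩, -, rfl⟩ := Finset.mem_image.mp hv
      exact ⟨b i hi, hbB i hi, hbc i hi⟩
    have hCA : C = A := by
      by_contra h
      exact hA.2 C hCAC h hDomA
    have hCB : C = B := by
      by_contra h
      exact hB.2 C hCAC h hDomB
    exact hCA.symm.trans hCB
  refine ⟨main, ?_⟩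
  choose p hp using hcover
  have hwit : ∀ A : Finset V, Frontier E A →
      (∃ f : V → Fin k, (∀ a ∈ A, f a ∈ A.image p ∧ a ∈ P (f a)) ∧
        (∀ a ∈ A, ∀ a' ∈ A, f a = f a' → a = a') ∧
        (∀ i ∈ A.image p, ∃ a ∈ A, f a = i)) := by
    intro A hA
    refine ⟨p, fun a ha => ⟨Finset.mem_image_of_mem p ha, hp a⟩, ?_, ?_⟩
    · intro a ha a' ha' hpp
      by_contra hne
      rcases chain'_comparable (hchain (p a)) (hp a) (hpp ▸ hp a') with h | h
      · exact hA.1 a ha a' ha' hne h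
      · exact hA.1 a' ha' a ha (Ne.symm hne) h
    · intro i hi
      obtain ⟨x, hx, rfl⟩ := Finset.mem_image.mp hi
      exact ⟨x, hx, rfl⟩
  have hinjOn : Set.InjOn (fun A : Finset V => A.image p) {A | Frontier E A} := by
    intro A hA B hB hab
    have hab' : Finset.image p B = Finset.image p A := hab.symm
    refine main (A.image p) A B hA hB (hwit A hA) ?_
    obtain ⟨g, hg1, hg2, hg3⟩ := hwit B hB
    exact ⟨g, fun x hx => ⟨hab' ▸ (hg1 x hx).1, (hg1 x hx).2⟩, hg2,
      fun i hi => hg3 i (hab' ▸ hi)⟩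
  calc {A : Finset V | Frontier E A}.ncard
      = ((fun A : Finset V => A.image p) '' {A | Frontier E A}).ncard :=
        (Set.ncard_image_of_injOn hinjOn).symm
    _ ≤ (Set.univ : Set (Finset (Fin k))).ncard :=
        Set.ncard_le_ncard (Set.subset_univ _) Set.finite_univ
    _ = 2 ^ k := by
        rw [Set.ncard_univ, Nat.card_eq_fintype_card, Fintype.card_finset, Fintype.card_fin]
end

section
/- (Type 1 lemma) Let G be a DAG with topological order v_1,...,v_n, let G_i = G[{v_1,...,v_i}], and let A be a frontier antichain of G_i with v_i ∈ A. Then A \ {v_i} is a frontier antichain of G_{i-1}. -/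
open Relation

/-- Type 1: if `A` is a frontier antichain of `G_{i+1}` containing the
new vertex `v_i = ⟨i, hi⟩`, then `A \ {v_i}` is a frontier antichain of `G_i`. -/
theorem type1 {n : ℕ} (E : Fin n → Fin n → Prop) (hE : Topo E)
    (i : ℕ) (hi : i < n) (A : Finset (Fin n))
    (hA : FrontierIn E (i + 1) A) (hv : (⟨i, hi⟩ : Fin n) ∈ A) :
    FrontierIn E i (A.erase ⟨i, hi⟩) := by
  set v : Fin n := ⟨i, hi⟩ with hvdef
  -- reachability implies index ≤
  have reach_le : ∀ (j : ℕ) (u w : Fin n), ReflTransGen (Erest E j) u w → (u : ℕ) ≤ (w : ℕ) := by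
    intro j u w h
    induction h with
    | refl => exact le_rfl
    | tail _ h2 ih => exact ih.trans (le_of_lt (hE _ _ h2.1))
  -- lifting from G_i to G_{i+1}
  have lift : ∀ u w : Fin n, ReflTransGen (Erest E i) u w →
      ReflTransGen (Erest E (i + 1)) u w := by
    intro u w h
    exact ReflTransGen.mono (r := Erest E i) (p := Erest E (i + 1)) (fun a b hab => ⟨hab.1, hab.2.1.trans (Nat.lt_succ_self i),
      hab.2.2.trans (Nat.lt_succ_self i)⟩) u w h
  -- paths in G_{i+1} ending below i stay in G_i
  have confine : ∀ u w : Fin n, ReflTransGen (Erest E (i + 1)) u w → (w : ℕ) < i →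
      ReflTransGen (Erest E i) u w := by
    intro u w h
    induction h using Relation.ReflTransGen.head_induction_on with
    | refl => intro _; exact ReflTransGen.refl
    | head h1 h2 ih =>
      intro hw
      have hcw : (_ : ℕ) ≤ (w : ℕ) := reach_le _ _ _ h2
      have hc : (_ : ℕ) < i := lt_of_le_of_lt hcw hw
      exact ReflTransGen.head ⟨h1.1, lt_trans (hE _ _ h1.1) hc, hc⟩ (ih hw)
  -- v is a sink in G_{i+1}
  have sink : ∀ w : Fin n, ReflTransGen (Erest E (i + 1)) v w → w = v := by
    intro w h
    rcases (Relation.ReflTransGen.cases_head h) with h | ⟨c, hc, _⟩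
    · exact h.symm
    · exact absurd hc.2.2 (by have := hE _ _ hc.1; simp only [hvdef] at this; omega)
  obtain ⟨hAlt, hAac, hAfr⟩ := hA
  have hAlt' : ∀ a ∈ A.erase v, (a : ℕ) < i := by
    intro a ha
    have h1 := hAlt a (Finset.mem_of_mem_erase ha)
    have h2 : a ≠ v := Finset.ne_of_mem_erase ha
    have : (a : ℕ) ≠ i := fun h => h2 (Fin.ext h)
    omega
  refine ⟨hAlt', ?_, ?_⟩
  · intro a ha b hb hab hr
    exact hAac a (Finset.mem_of_mem_erase ha) b (Finset.mem_of_mem_erase hb) hab (lift _ _ hr)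
  · intro B hBlt hBac hBne ⟨hBcard, hBdom⟩
    have hvB : v ∉ B := fun h => by have := hBlt v h; simp [hvdef] at this
    -- no b ∈ B reaches v in G_{i+1}
    have noreach : ∀ b ∈ B, ¬ ReflTransGen (Erest E (i + 1)) b v := by
      intro b hb hr
      obtain ⟨a, ha, har⟩ := hBdom b hb
      have hav : ReflTransGen (Erest E (i + 1)) a v := (lift _ _ har).trans hr
      have hane : a ≠ v := Finset.ne_of_mem_erase ha
      exact hAac a (Finset.mem_of_mem_erase ha) v hv hane hav
    -- B ∪ {v} contradicts frontierness of A in G_{i+1}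
    apply hAfr (insert v B)
    · intro b hb
      rcases Finset.mem_insert.mp hb with h | h
      · simp [h, hvdef]
      · exact (hBlt b h).trans (Nat.lt_succ_self i)
    · intro a ha b hb hab hr
      rcases Finset.mem_insert.mp ha with ha' | ha' <;>
        rcases Finset.mem_insert.mp hb with hb' | hb'
      · exact hab (ha'.trans hb'.symm)
      · subst ha'; exact hab (sink b hr).symm
      · subst hb'; exact noreach a ha' hr
      · exact hBac a ha' b hb' hab (confine _ _ hr (hBlt b hb'))
    · intro h
      apply hBne
      have := congrArg (fun s => Finset.erase s v) h
      simpa [Finset.erase_insert hvB] using this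
    · constructor
      · rw [Finset.card_insert_of_notMem hvB, hBcard, Finset.card_erase_of_mem hv]
        have : 0 < A.card := Finset.card_pos.mpr ⟨v, hv⟩
        omega
      · intro b hb
        rcases Finset.mem_insert.mp hb with h | h
        · exact ⟨v, hv, by rw [h]⟩
        · obtain ⟨a, ha, har⟩ := hBdom b h
          exact ⟨a, Finset.mem_of_mem_erase ha, lift _ _ har⟩
end

section
/- (Type 2 lemma) Let G be a DAG with topological order v_1,...,v_n, G_i = G[{v_1,...,v_i}], and let A be a frontier antichain of G_i with v_i ∉ A. Then A is a frontier antichain of G_{i-1}. -/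
open Relation

/-- Paths in `G_{i+1}` ending below `i` stay in `G_i`. -/
lemma restrict_path {n : ℕ} {E : Fin n → Fin n → Prop} (hE : Topo E) {i : ℕ}
    {a b : Fin n} (h : ReflTransGen (Erest E (i + 1)) a b) (hb : (b : ℕ) < i) :
    ReflTransGen (Erest E i) a b := by
  induction h with
  | refl => exact ReflTransGen.refl
  | tail hac hcb ih =>
    rename_i c b
    have hc : (c : ℕ) < i := lt_trans (hE _ _ hcb.1) hb
    exact (ih hc).tail ⟨hcb.1, hc, hb⟩

/-- Type 2: a frontier antichain of `G_{i+1}` not containing the new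
vertex `v_i = ⟨i, hi⟩` is a frontier antichain of `G_i`. -/

theorem type2 {n : ℕ} (E : Fin n → Fin n → Prop) (hE : Topo E)
    (i : ℕ) (hi : i < n) (A : Finset (Fin n))
    (hA : FrontierIn E (i + 1) A) (hv : (⟨i, hi⟩ : Fin n) ∉ A) :
    FrontierIn E i A := by
  obtain ⟨hlt, hac, hfr⟩ := hA
  have hlt' : ∀ a ∈ A, (a : ℕ) < i := by
    intro a ha
    have := hlt a ha
    rcases Nat.lt_succ_iff_lt_or_eq.mp this with h | h
    · exact h
    · exact absurd ha (by
        have : a = (⟨i, hi⟩ : Fin n) := Fin.ext h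
        rw [this]; exact hv)
  have mono : ∀ {u v : Fin n}, ReflTransGen (Erest E i) u v →
      ReflTransGen (Erest E (i+1)) u v := by
    intro u v h
    exact ReflTransGen.mono (p := Erest E (i+1)) (fun x y hxy => ⟨hxy.1, hxy.2.1.trans (Nat.lt_succ_self i),
      hxy.2.2.trans (Nat.lt_succ_self i)⟩) u v h
  refine ⟨hlt', ?_, ?_⟩
  · intro a ha b hb hab hr
    exact hac a ha b hb hab (mono hr)
  · intro B hB hBac hBA ⟨hcard, hdom⟩
    refine hfr B (fun b hb => (hB b hb).trans (Nat.lt_succ_self i)) ?_ hBA ⟨hcard, ?_⟩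
    · intro a ha b hb hab hr
      exact hBac a ha b hb hab (restrict_path hE hr (hB b hb))
    · intro b hb
      obtain ⟨a, ha, hr⟩ := hdom b hb
      exact ⟨a, ha, mono hr⟩
end

section
/- Let G be a DAG with topological order v_1,...,v_n and G_i = G[{v_1,...,v_i}]. If A is a frontier antichain of G_{i-1} such that no vertex of A reaches v_i in G_i, then A ∪ {v_i} is a frontier antichain of G_i. -/
open Relation

/-- if a frontier antichain `A` of `G_i` does not reach the new vertex
`v_i = ⟨i, hi⟩`, then `A ∪ {v_i}` is a frontier antichain of `G_{i+1}`. -/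
theorem all_type1 {n : ℕ} (E : Fin n → Fin n → Prop) (hE : Topo E)
    (i : ℕ) (hi : i < n) (A : Finset (Fin n))
    (hA : FrontierIn E i A)
    (hreach : ∀ a ∈ A, ¬ ReflTransGen (Erest E (i + 1)) a ⟨i, hi⟩) :
    FrontierIn E (i + 1) (insert ⟨i, hi⟩ A) := by
  obtain ⟨hAlt, hAac, hAfr⟩ := hA
  set vi : Fin n := ⟨i, hi⟩ with hvi
  have hviA : vi ∉ A := fun h => lt_irrefl i (hAlt vi h)
  have hsink : ∀ w, ¬ Erest E (i+1) vi w := by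
    rintro w ⟨he, hu, hv⟩
    have := hE _ _ he
    simp [hvi] at this
    omega
  have hsinkR : ∀ w, ReflTransGen (Erest E (i+1)) vi w → w = vi := by
    intro w h
    rcases h.cases_head with rfl | ⟨m, hm, _⟩
    · rfl
    · exact absurd hm (hsink m)
  have hrestrict : ∀ u w : Fin n, ReflTransGen (Erest E (i+1)) u w → (w:ℕ) < i →
      ReflTransGen (Erest E i) u w := by
    intro u w h
    induction h with
    | refl => intro _; exact ReflTransGen.refl
    | tail h1 h2 ih =>
      intro hw
      obtain ⟨he, _, _⟩ := h2
      have hlt := hE _ _ he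
      exact (ih (by omega)).tail ⟨he, by omega, hw⟩
  have hmono : ∀ u w : Fin n, ReflTransGen (Erest E i) u w →
      ReflTransGen (Erest E (i+1)) u w := by
    intro u w h
    exact ReflTransGen.mono (p := Erest E (i+1)) (fun a b (hab : Erest E i a b) => (⟨hab.1, Nat.lt_succ_of_lt hab.2.1, Nat.lt_succ_of_lt hab.2.2⟩ : Erest E (i+1) a b)) u w h
  refine ⟨?_, ?_, ?_⟩
  · intro a ha
    rcases Finset.mem_insert.1 ha with rfl | ha
    · simp [hvi]
    · exact lt_trans (hAlt a ha) (Nat.lt_succ_self i)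
  · intro a ha b hb hab hr
    rcases Finset.mem_insert.1 ha with rfl | ha
    · rcases Finset.mem_insert.1 hb with rfl | hb
      · exact hab rfl
      · exact hab (hsinkR b hr).symm
    · rcases Finset.mem_insert.1 hb with rfl | hb
      · exact hreach a ha hr
      · exact hAac a ha b hb hab (hrestrict a b hr (hAlt b hb))
  · rintro B hBlt hBac hBne ⟨hBcard, hBdom⟩
    rw [Finset.card_insert_of_notMem hviA] at hBcard
    have hblt : ∀ b ∈ B, b ≠ vi → (b:ℕ) < i := by
      intro b hb hbne
      have h1 := hBlt b hb
      have h2 : (b:ℕ) ≠ i := fun h => hbne (Fin.ext h)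
      omega
    by_cases hviB : vi ∈ B
    · set B' := B.erase vi with hB'
      have hB'card : B'.card = A.card := by
        rw [hB', Finset.card_erase_of_mem hviB]; omega
      have hB'lt : ∀ b ∈ B', (b:ℕ) < i := fun b hb =>
        hblt b (Finset.mem_of_mem_erase hb) (Finset.ne_of_mem_erase hb)
      have hB'ac : IsAC (Erest E i) B' := fun a ha b hb hab hr =>
        hBac a (Finset.mem_of_mem_erase ha) b (Finset.mem_of_mem_erase hb) hab
          (hmono a b hr)
      have hB'ne : B' ≠ A := by
        intro h
        apply hBne
        rw [← Finset.insert_erase hviB, ← hB', h]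
      refine hAfr B' hB'lt hB'ac hB'ne ⟨hB'card, ?_⟩
      intro b hb
      obtain ⟨a, haIns, har⟩ := hBdom b (Finset.mem_of_mem_erase hb)
      rcases Finset.mem_insert.1 haIns with rfl | haA
      · exact absurd (hsinkR b har) (Finset.ne_of_mem_erase hb)
      · exact ⟨a, haA, hrestrict a b har (hB'lt b hb)⟩
    · have hBne' : B.Nonempty := Finset.card_pos.mp (by omega)
      obtain ⟨b₀, hb₀⟩ := hBne'
      have hBlt' : ∀ b ∈ B, (b:ℕ) < i := fun b hb =>
        hblt b hb (fun h => hviB (h ▸ hb))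
      set B' := B.erase b₀ with hB'
      have hB'card : B'.card = A.card := by
        rw [hB', Finset.card_erase_of_mem hb₀]; omega
      have hB'ac : IsAC (Erest E i) B' := fun a ha b hb hab hr =>
        hBac a (Finset.mem_of_mem_erase ha) b (Finset.mem_of_mem_erase hb) hab
          (hmono a b hr)
      have hdom' : ∀ b ∈ B, ∃ a ∈ A, ReflTransGen (Erest E i) a b := by
        intro b hb
        obtain ⟨a, haIns, har⟩ := hBdom b hb
        rcases Finset.mem_insert.1 haIns with rfl | haA
        · exact absurd ((hsinkR b har) ▸ hb) hviB
        · exact ⟨a, haA, hrestrict a b har (hBlt' b hb)⟩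
      have hB'ne : B' ≠ A := by
        intro h
        obtain ⟨a₀, ha₀, har⟩ := hdom' b₀ hb₀
        by_cases hab : a₀ = b₀
        · subst hab
          have : a₀ ∈ B' := h ▸ ha₀
          exact Finset.notMem_erase a₀ B this
        · have ha₀B : a₀ ∈ B := Finset.mem_of_mem_erase (h ▸ ha₀)
          exact hBac a₀ ha₀B b₀ hb₀ hab (hmono a₀ b₀ har)
      exact hAfr B' (fun b hb => hBlt' b (Finset.mem_of_mem_erase hb)) hB'ac hB'ne
        ⟨hB'card, fun b hb => hdom' b (Finset.mem_of_mem_erase hb)⟩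
end

section
/- (Support monotonicity) Let G be a DAG with topological order v_1,...,v_n, G_i = G[{v_1,...,v_i}], and let S_i be the union of all frontier antichains of G_i. If v ∈ {v_1,...,v_i} and v ∉ S_i, then v ∉ S_j for all j ≥ i. -/
open Relation

lemma erest_mono {n : ℕ} (E : Fin n → Fin n → Prop) {i j : ℕ} (h : i ≤ j) :
    ∀ u v, Erest E i u v → Erest E j u v :=
  fun _ _ ⟨he, hu, hv⟩ => ⟨he, hu.trans_le h, hv.trans_le h⟩

lemma rtg_restrict {n : ℕ} {E : Fin n → Fin n → Prop} (hE : Topo E) {j : ℕ} {a b : Fin n}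
    (h : ReflTransGen (Erest E (j+1)) a b) : (b : ℕ) < j → ReflTransGen (Erest E j) a b := by
  induction h with
  | refl => intro _; exact ReflTransGen.refl
  | @tail c d h1 h2 ih =>
    intro hd
    have hc : (c : ℕ) < j := lt_trans (hE _ _ h2.1) hd
    exact (ih hc).tail ⟨h2.1, hc, hd⟩

lemma sink_rtg {n : ℕ} {E : Fin n → Fin n → Prop} (hE : Topo E) {j : ℕ} {w b : Fin n}
    (hw : (w : ℕ) = j) (h : ReflTransGen (Erest E (j+1)) w b) : b = w := by
  rcases h.cases_head with h | ⟨c, hc, _⟩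
  · exact h.symm
  · have := hE _ _ hc.1
    have := hc.2.2
    omega

lemma support_step {n : ℕ} {E : Fin n → Fin n → Prop} (hE : Topo E) {j : ℕ} (hjn : j < n)
    {v : Fin n} (hv : (v : ℕ) < j) (hmem : v ∈ SupportIn E (j+1)) : v ∈ SupportIn E j := by
  obtain ⟨A, ⟨hAlt, hAac, hAfr⟩, hvA⟩ := hmem
  set w : Fin n := ⟨j, hjn⟩ with hwdef
  have hwval : (w : ℕ) = j := rfl
  by_cases hwA : w ∈ A
  · -- w ∈ A : use A.erase w
    have hA' : ∀ a ∈ A.erase w, (a : ℕ) < j := by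
      intro a ha
      have h1 := hAlt a (Finset.mem_of_mem_erase ha)
      have h2 : a ≠ w := Finset.ne_of_mem_erase ha
      have : (a : ℕ) ≠ j := fun h => h2 (Fin.ext (h.trans hwval.symm))
      omega
    refine ⟨A.erase w, ⟨hA', ?_, ?_⟩, Finset.mem_erase.mpr ⟨fun h => by simp [h, hwdef] at hv, hvA⟩⟩
    · intro a ha b hb hab hr
      exact hAac a (Finset.mem_of_mem_erase ha) b (Finset.mem_of_mem_erase hb) hab
        (ReflTransGen.mono (erest_mono E (Nat.le_succ j)) _ _ hr)
    · rintro B hBlt hBac hBA ⟨hcard, hdom⟩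
      have hwB : w ∉ B := fun h => by have := hBlt w h; omega
      -- no b ∈ B reaches w in G_{j+1}
      have hnoreach : ∀ b ∈ B, ¬ ReflTransGen (Erest E (j+1)) b w := by
        intro b hb hr
        obtain ⟨a, ha, har⟩ := hdom b hb
        have haw : a ≠ w := Finset.ne_of_mem_erase ha
        exact hAac a (Finset.mem_of_mem_erase ha) w hwA haw
          (((ReflTransGen.mono (erest_mono E (Nat.le_succ j)) _ _ har)).trans hr)
      refine hAfr (insert w B) ?_ ?_ ?_ ⟨?_, ?_⟩
      · intro b hb
        rcases Finset.mem_insert.mp hb with rfl | hb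
        · omega
        · exact (hBlt b hb).trans (Nat.lt_succ_self j)
      · intro x hx y hy hxy hr
        rcases Finset.mem_insert.mp hx with rfl | hx
        · exact hxy (sink_rtg hE hwval hr).symm
        · rcases Finset.mem_insert.mp hy with rfl | hy
          · exact hnoreach x hx hr
          · exact hBac x hx y hy hxy (rtg_restrict hE hr (hBlt y hy))
      · intro h
        apply hBA
        have : B = (insert w B).erase w := by
          rw [Finset.erase_insert hwB]
        rw [this, h]
      · have hcardA : 0 < A.card := Finset.card_pos.mpr ⟨w, hwA⟩
        rw [Finset.card_insert_of_notMem hwB, hcard, Finset.card_erase_of_mem hwA]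
        omega
      · intro b hb
        rcases Finset.mem_insert.mp hb with rfl | hb
        · exact ⟨w, hwA, ReflTransGen.refl⟩
        · obtain ⟨a, ha, har⟩ := hdom b hb
          exact ⟨a, Finset.mem_of_mem_erase ha, ReflTransGen.mono (erest_mono E (Nat.le_succ j)) _ _ har⟩
  · -- w ∉ A : A itself is frontier in G_j
    have hA : ∀ a ∈ A, (a : ℕ) < j := by
      intro a ha
      have h1 := hAlt a ha
      have : (a : ℕ) ≠ j := by
        intro h
        exact hwA ((Fin.ext (h.trans hwval.symm) : a = w) ▸ ha)
      omega
    refine ⟨A, ⟨hA, ?_, ?_⟩, hvA⟩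
    · intro a ha b hb hab hr
      exact hAac a ha b hb hab (ReflTransGen.mono (erest_mono E (Nat.le_succ j)) _ _ hr)
    · rintro B hBlt hBac hBA ⟨hcard, hdom⟩
      refine hAfr B (fun b hb => (hBlt b hb).trans (Nat.lt_succ_self j)) ?_ hBA ⟨hcard, ?_⟩
      · intro a ha b hb hab hr
        exact hBac a ha b hb hab (rtg_restrict hE hr (hBlt b hb))
      · intro b hb
        obtain ⟨a, ha, har⟩ := hdom b hb
        exact ⟨a, ha, ReflTransGen.mono (erest_mono E (Nat.le_succ j)) _ _ har⟩

lemma support_down {n : ℕ} {E : Fin n → Fin n → Prop} (hE : Topo E) {i : ℕ} {v : Fin n}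
    (hv : (v : ℕ) < i) :
    ∀ j, i ≤ j → j ≤ n → v ∈ SupportIn E j → v ∈ SupportIn E i := by
  intro j
  induction j with
  | zero => intro hij _ _; omega
  | succ j ih =>
    intro hij hjn hmem
    rcases Nat.eq_or_lt_of_le hij with h | h
    · exact h ▸ hmem
    · have hij' : i ≤ j := by omega
      exact ih hij' (by omega) (support_step hE (by omega) (by omega) hmem)

/-- support monotonicity: a vertex that leaves the support never re-enters. -/
theorem support_monotone {n : ℕ} (E : Fin n → Fin n → Prop) (hE : Topo E)
    (i j : ℕ) (hij : i ≤ j) (hj : j ≤ n)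
    (v : Fin n) (hv : (v : ℕ) < i) (h : v ∉ SupportIn E i) :
    v ∉ SupportIn E j := by
  intro hmem
  exact h (support_down hE hv j hij hj hmem)
end

section
/- A DAG of width k has at most 2^k frontier antichains. -/
open Relation

open Finset

/-- Max element of a nonempty finset in a partial order need not exist, but a maximal one does. -/
lemma fs_exists_maximal {V : Type*} [PartialOrder V] (S : Finset V) (h : S.Nonempty) :
    ∃ m ∈ S, ∀ x ∈ S, m ≤ x → m = x := by
  obtain ⟨m, hm, hmax⟩ := Set.Finite.exists_maximalFor id (↑S : Set V) S.finite_toSet (by exact_mod_cast h)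
  exact ⟨m, by exact_mod_cast hm, fun x hx hle => le_antisymm hle (hmax (by exact_mod_cast hx) hle)⟩

lemma fs_exists_minimal {V : Type*} [PartialOrder V] (S : Finset V) (h : S.Nonempty) :
    ∃ m ∈ S, ∀ x ∈ S, x ≤ m → m = x := by
  obtain ⟨m, hm, hmax⟩ := Set.Finite.exists_minimalFor id (↑S : Set V) S.finite_toSet (by exact_mod_cast h)
  exact ⟨m, by exact_mod_cast hm, fun x hx hle => le_antisymm (hmax (by exact_mod_cast hx) hle) hle⟩

/-- Dilworth's theorem, Finset form: if every antichain in `S` has at most `k` elements,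
then `S` can be covered by at most `k` chains. -/
lemma dilworth {V : Type*} [DecidableEq V] [PartialOrder V] :
    ∀ n k : ℕ, ∀ S : Finset V, S.card + k ≤ n →
    (∀ A : Finset V, A ⊆ S → (∀ a ∈ A, ∀ b ∈ A, a ≠ b → ¬ a ≤ b) → A.card ≤ k) →
    ∃ P : Finset (Finset V), P.card ≤ k ∧ (∀ C ∈ P, C ⊆ S) ∧
      (∀ C ∈ P, ∀ x ∈ C, ∀ y ∈ C, x ≤ y ∨ y ≤ x) ∧
      ∀ v ∈ S, ∃ C ∈ P, v ∈ C := by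
  intro n
  induction n with
  | zero =>
    intro k S hn hw
    have hS : S = ∅ := card_eq_zero.mp (by omega)
    exact ⟨∅, by simp, by simp, by simp, by simp [hS]⟩
  | succ n ih =>
    intro k S hn hw
    classical
    by_cases hS : S = ∅
    · exact ⟨∅, by simp, by simp, by simp, by simp [hS]⟩
    have hSne : S.Nonempty := nonempty_iff_ne_empty.mpr hS
    obtain ⟨v0, hv0⟩ := hSne
    have hk1 : 1 ≤ k := by
      have := hw {v0} (by simpa) (by simp)
      simpa using this
    by_cases hgood : ∃ A : Finset V, A ⊆ S ∧ (∀ a ∈ A, ∀ b ∈ A, a ≠ b → ¬ a ≤ b) ∧ A.card = k ∧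
        S.filter (fun x => ∃ a ∈ A, x ≤ a) ≠ S ∧ S.filter (fun x => ∃ a ∈ A, a ≤ x) ≠ S
    · obtain ⟨A, hAS, hAac, hAcard, hDne, hUne⟩ := hgood
      set D := S.filter (fun x => ∃ a ∈ A, x ≤ a) with hDdef
      set U := S.filter (fun x => ∃ a ∈ A, a ≤ x) with hUdef
      have hDS : D ⊆ S := filter_subset _ _
      have hUS : U ⊆ S := filter_subset _ _
      have hDcard : D.card < S.card := card_lt_card (ssubset_of_subset_of_ne hDS hDne)
      have hUcard : U.card < S.card := card_lt_card (ssubset_of_subset_of_ne hUS hUne)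
      obtain ⟨PD, hPDcard, hPDsub, hPDchain, hPDcov⟩ :=
        ih k D (by omega) (fun B hB hBac => hw B (hB.trans hDS) hBac)
      obtain ⟨PU, hPUcard, hPUsub, hPUchain, hPUcov⟩ :=
        ih k U (by omega) (fun B hB hBac => hw B (hB.trans hUS) hBac)
      have hAD : A ⊆ D := fun a ha => mem_filter.mpr ⟨hAS ha, a, ha, le_refl a⟩
      have hAU : A ⊆ U := fun a ha => mem_filter.mpr ⟨hAS ha, a, ha, le_refl a⟩
      have hcovD : ∀ a : {x // x ∈ A}, ∃ C, C ∈ PD ∧ a.1 ∈ C := fun a => by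
        obtain ⟨C, hC, hm⟩ := hPDcov a.1 (hAD a.2); exact ⟨C, hC, hm⟩
      have hcovU : ∀ a : {x // x ∈ A}, ∃ C, C ∈ PU ∧ a.1 ∈ C := fun a => by
        obtain ⟨C, hC, hm⟩ := hPUcov a.1 (hAU a.2); exact ⟨C, hC, hm⟩
      choose fD hfD1 hfD2 using hcovD
      choose fU hfU1 hfU2 using hcovU
      -- key facts: every element of the D-chain of a is ≤ a, dually for U
      have keyD : ∀ a : {x // x ∈ A}, ∀ x ∈ fD a, x ≤ a.1 := by
        intro a x hx
        have hxD : x ∈ D := hPDsub _ (hfD1 a) hx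
        obtain ⟨aj, haj, hxaj⟩ := (mem_filter.mp hxD).2
        rcases hPDchain _ (hfD1 a) x hx a.1 (hfD2 a) with h | h
        · exact h
        · -- a ≤ x ≤ aj, so a = aj by antichain, then x ≤ a
          have heq : a.1 = aj := by
            by_contra hne
            exact hAac a.1 a.2 aj haj hne (h.trans hxaj)
          rw [heq]; exact hxaj
      have keyU : ∀ a : {x // x ∈ A}, ∀ x ∈ fU a, a.1 ≤ x := by
        intro a x hx
        have hxU : x ∈ U := hPUsub _ (hfU1 a) hx
        obtain ⟨aj, haj, hxaj⟩ := (mem_filter.mp hxU).2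
        rcases hPUchain _ (hfU1 a) x hx a.1 (hfU2 a) with h | h
        · have heq : a.1 = aj := by
            by_contra hne
            exact hAac aj haj a.1 a.2 (fun h' => hne h'.symm) (hxaj.trans h)
          rw [heq]; exact hxaj
        · exact h
      have hinjD : Function.Injective fD := by
        intro a b h
        have hcomp := hPDchain (fD a) (hfD1 a) a.1 (hfD2 a) b.1 (h ▸ hfD2 b)
        have : a.1 = b.1 := by
          by_contra hne
          rcases hcomp with h' | h'
          · exact hAac a.1 a.2 b.1 b.2 hne h'
          · exact hAac b.1 b.2 a.1 a.2 (Ne.symm hne) h'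
        exact Subtype.ext this
      have hinjU : Function.Injective fU := by
        intro a b h
        have hcomp := hPUchain (fU a) (hfU1 a) a.1 (hfU2 a) b.1 (h ▸ hfU2 b)
        have : a.1 = b.1 := by
          by_contra hne
          rcases hcomp with h' | h'
          · exact hAac a.1 a.2 b.1 b.2 hne h'
          · exact hAac b.1 b.2 a.1 a.2 (Ne.symm hne) h'
        exact Subtype.ext this
      have himD : A.attach.image fD = PD := by
        apply eq_of_subset_of_card_le
        · intro C hC
          obtain ⟨a, _, rfl⟩ := mem_image.mp hC
          exact hfD1 a
        · rw [card_image_of_injective _ hinjD, card_attach, hAcard]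
          exact hPDcard
      have himU : A.attach.image fU = PU := by
        apply eq_of_subset_of_card_le
        · intro C hC
          obtain ⟨a, _, rfl⟩ := mem_image.mp hC
          exact hfU1 a
        · rw [card_image_of_injective _ hinjU, card_attach, hAcard]
          exact hPUcard
      refine ⟨A.attach.image (fun a => fD a ∪ fU a), ?_, ?_, ?_, ?_⟩
      · calc (A.attach.image (fun a => fD a ∪ fU a)).card ≤ A.attach.card := card_image_le
          _ = k := by rw [card_attach, hAcard]
      · intro C hC
        obtain ⟨a, _, rfl⟩ := mem_image.mp hC
        exact union_subset ((hPDsub _ (hfD1 a)).trans hDS) ((hPUsub _ (hfU1 a)).trans hUS)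
      · intro C hC x hx y hy
        obtain ⟨a, _, rfl⟩ := mem_image.mp hC
        rcases mem_union.mp hx with hx | hx <;> rcases mem_union.mp hy with hy | hy
        · exact hPDchain _ (hfD1 a) x hx y hy
        · exact Or.inl ((keyD a x hx).trans (keyU a y hy))
        · exact Or.inr ((keyD a y hy).trans (keyU a x hx))
        · exact hPUchain _ (hfU1 a) x hx y hy
      · intro v hv
        have hvDU : v ∈ D ∨ v ∈ U := by
          by_cases hvA : v ∈ A
          · exact Or.inl (hAD hvA)
          by_contra hcon
          push_neg at hcon
          obtain ⟨h1, h2⟩ := hcon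
          -- v incomparable to all of A, so insert v A is an antichain of size k+1
          have hno : ∀ a ∈ A, ¬ v ≤ a ∧ ¬ a ≤ v := by
            intro a ha
            constructor
            · intro h; exact h1 (mem_filter.mpr ⟨hv, a, ha, h⟩)
            · intro h; exact h2 (mem_filter.mpr ⟨hv, a, ha, h⟩)
          have hac : ∀ p ∈ insert v A, ∀ q ∈ insert v A, p ≠ q → ¬ p ≤ q := by
            intro p hp q hq hne
            rcases mem_insert.mp hp with hp' | hp' <;> rcases mem_insert.mp hq with hq' | hq'
            · exact absurd (hp'.trans hq'.symm) hne
            · subst hp'; exact (hno q hq').1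
            · subst hq'; exact (hno p hp').2
            · exact hAac p hp' q hq' hne
          have hsub : insert v A ⊆ S := insert_subset hv hAS
          have := hw _ hsub hac
          rw [card_insert_of_notMem hvA, hAcard] at this
          omega
        rcases hvDU with h | h
        · obtain ⟨C, hC, hvC⟩ := hPDcov v h
          rw [← himD] at hC
          obtain ⟨a, ha, rfl⟩ := mem_image.mp hC
          exact ⟨fD a ∪ fU a, mem_image.mpr ⟨a, ha, rfl⟩, mem_union_left _ hvC⟩
        · obtain ⟨C, hC, hvC⟩ := hPUcov v h
          rw [← himU] at hC
          obtain ⟨a, ha, rfl⟩ := mem_image.mp hC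
          exact ⟨fD a ∪ fU a, mem_image.mpr ⟨a, ha, rfl⟩, mem_union_right _ hvC⟩
    · by_cases hex : ∃ A : Finset V, A ⊆ S ∧ (∀ a ∈ A, ∀ b ∈ A, a ≠ b → ¬ a ≤ b) ∧ A.card = k
      · -- every max antichain is the set of minimal or maximal elements; remove a 2-chain
        obtain ⟨m, hmS, hmax⟩ := fs_exists_maximal S ⟨v0, hv0⟩
        have hSmne : (S.filter (fun x => x ≤ m)).Nonempty := ⟨m, mem_filter.mpr ⟨hmS, le_refl m⟩⟩
        obtain ⟨b, hbSm, hbmin⟩ := fs_exists_minimal _ hSmne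
        have hbS : b ∈ S := (mem_filter.mp hbSm).1
        have hbm : b ≤ m := (mem_filter.mp hbSm).2
        set K : Finset V := {b, m} with hKdef
        set S' := S \ K with hS'def
        push_neg at hgood
        have hwS' : ∀ B : Finset V, B ⊆ S' → (∀ a ∈ B, ∀ b ∈ B, a ≠ b → ¬ a ≤ b) → B.card ≤ k - 1 := by
          intro B hB hBac
          by_contra hcon
          push_neg at hcon
          have hBS : B ⊆ S := hB.trans (sdiff_subset)
          have hBk : B.card = k := le_antisymm (hw B hBS hBac) (by omega)
          rcases (or_iff_not_imp_left.mpr (hgood B hBS hBac hBk) : _ ∨ _) with h | h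
          · -- D(B) = S : m ≤ some a ∈ B
            have hm' : m ∈ S.filter (fun x => ∃ a ∈ B, x ≤ a) := by rw [h]; exact hmS
            obtain ⟨a, haB, hma⟩ := (mem_filter.mp hm').2
            have : m = a := hmax a (hBS haB) hma
            subst this
            have : m ∈ K := by simp [hKdef]
            exact (mem_sdiff.mp (hB haB)).2 this
          · -- U(B) = S : some a ∈ B with a ≤ b
            have hb' : b ∈ S.filter (fun x => ∃ a ∈ B, a ≤ x) := by rw [h]; exact hbS
            obtain ⟨a, haB, hab⟩ := (mem_filter.mp hb').2
            have haSm : a ∈ S.filter (fun x => x ≤ m) := mem_filter.mpr ⟨hBS haB, hab.trans hbm⟩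
            have : b = a := hbmin a haSm hab
            subst this
            have : b ∈ K := by simp [hKdef]
            exact (mem_sdiff.mp (hB haB)).2 this
        have hS'card : S'.card < S.card := by
          apply card_lt_card
          constructor
          · exact sdiff_subset
          · intro hsub
            have := hsub hmS
            rw [hS'def, mem_sdiff] at this
            exact this.2 (by simp [hKdef])
        obtain ⟨P', hP'card, hP'sub, hP'chain, hP'cov⟩ := ih (k - 1) S' (by omega) hwS'
        refine ⟨insert K P', ?_, ?_, ?_, ?_⟩
        · calc (insert K P').card ≤ P'.card + 1 := card_insert_le _ _
            _ ≤ k := by omega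
        · intro C hC
          rcases mem_insert.mp hC with rfl | hC
          · intro x hx
            rcases mem_insert.mp hx with rfl | hx
            · exact hbS
            · simp only [mem_singleton] at hx; subst hx; exact hmS
          · exact (hP'sub C hC).trans sdiff_subset
        · intro C hC x hx y hy
          rcases mem_insert.mp hC with rfl | hC
          · simp only [hKdef, mem_insert, mem_singleton] at hx hy
            rcases hx with rfl | rfl <;> rcases hy with rfl | rfl
            · exact Or.inl (le_refl _)
            · exact Or.inl hbm
            · exact Or.inr hbm
            · exact Or.inl (le_refl _)
          · exact hP'chain C hC x hx y hy
        · intro v hv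
          by_cases hvK : v ∈ K
          · exact ⟨K, mem_insert_self _ _, hvK⟩
          · obtain ⟨C, hC, hvC⟩ := hP'cov v (mem_sdiff.mpr ⟨hv, hvK⟩)
            exact ⟨C, mem_insert_of_mem hC, hvC⟩
      · -- no antichain of size k: use k - 1
        have hw' : ∀ B : Finset V, B ⊆ S → (∀ a ∈ B, ∀ b ∈ B, a ≠ b → ¬ a ≤ b) → B.card ≤ k - 1 := by
          intro B hB hBac
          have h1 := hw B hB hBac
          have h2 : B.card ≠ k := fun h => hex ⟨B, hB, hBac, h⟩
          omega
        obtain ⟨P', hP'card, hP'sub, hP'chain, hP'cov⟩ := ih (k - 1) S (by omega) hw'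
        exact ⟨P', by omega, hP'sub, hP'chain, hP'cov⟩


/-- a DAG of width `k` has at most `2^k` frontier antichains. -/

theorem frontier_count {V : Type*} [Fintype V] (E : V → V → Prop) (hE : Acyclic E)
    (k : ℕ)
    (hw1 : ∀ A : Finset V, IsAC E A → A.card ≤ k)
    (hw2 : ∃ A : Finset V, IsAC E A ∧ A.card = k) :
    {A : Finset V | Frontier E A}.ncard ≤ 2 ^ k := by
  classical
  letI : PartialOrder V :=
    { le := ReflTransGen E
      le_refl := fun a => ReflTransGen.refl
      le_trans := fun a b c h1 h2 => ReflTransGen.trans h1 h2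
      le_antisymm := by
        intro a b h1 h2
        by_contra hne
        rcases (reflTransGen_iff_eq_or_transGen.mp h1) with h | h
        · exact hne h.symm
        · exact hE a (TransGen.trans_left h h2) }
  have hle : ∀ a b : V, (a ≤ b) = ReflTransGen E a b := fun a b => rfl
  -- Dilworth chain cover of the whole vertex set
  obtain ⟨P, hPcard, _, hPchain, hPcov⟩ :=
    dilworth (Fintype.card V + k) k (Finset.univ : Finset V) le_rfl
      (fun A _ hac => hw1 A hac)
  have hcov : ∀ v : V, ∃ C, C ∈ P ∧ v ∈ C := fun v => by
    obtain ⟨C, hC, hm⟩ := hPcov v (Finset.mem_univ v); exact ⟨C, hC, hm⟩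
  choose ch hch1 hch2 using hcov
  -- comparability of elements sharing the same chosen chain
  have comp : ∀ x y : V, ch x = ch y → x ≤ y ∨ y ≤ x := by
    intro x y h
    exact hPchain (ch y) (hch1 y) x (h ▸ hch2 x) y (hch2 y)
  -- ch is injective on any antichain
  have chinj : ∀ A : Finset V, IsAC E A → ∀ a ∈ A, ∀ b ∈ A, ch a = ch b → a = b := by
    intro A hA a ha b hb h
    by_contra hne
    rcases comp a b h with h' | h'
    · exact hA a ha b hb hne h'
    · exact hA b hb a ha (Ne.symm hne) h'
  -- key: if two frontier antichains have the same chain-image, the "pointwise max" set equals A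
  have key : ∀ A B : Finset V, Frontier E A → Frontier E B →
      A.image ch = B.image ch →
      (A ∪ B).filter (fun v => ∀ w ∈ A ∪ B, ch w = ch v → w ≤ v) = A := by
    intro A B hFA hFB himg
    set T := (A ∪ B).filter (fun v => ∀ w ∈ A ∪ B, ch w = ch v → w ≤ v) with hTdef
    have hAB : ∀ a ∈ A, ∃ b ∈ B, ch b = ch a := by
      intro a ha
      have : ch a ∈ B.image ch := himg ▸ Finset.mem_image_of_mem ch ha
      obtain ⟨b, hb, hba⟩ := Finset.mem_image.mp this
      exact ⟨b, hb, hba⟩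
    have hBA : ∀ b ∈ B, ∃ a ∈ A, ch a = ch b := by
      intro b hb
      have : ch b ∈ A.image ch := himg.symm ▸ Finset.mem_image_of_mem ch hb
      obtain ⟨a, ha, hab⟩ := Finset.mem_image.mp this
      exact ⟨a, ha, hab⟩
    -- for each u ∈ A ∪ B, the max of its fiber lies in T, above u, in the same chain
    have hfiber : ∀ u ∈ A ∪ B, ∃ t ∈ T, u ≤ t ∧ ch t = ch u := by
      intro u hu
      set F := (A ∪ B).filter (fun w => ch w = ch u) with hFdef
      have hFne : F.Nonempty := ⟨u, Finset.mem_filter.mpr ⟨hu, rfl⟩⟩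
      obtain ⟨t, htF, htmax⟩ := fs_exists_maximal F hFne
      have htAB : t ∈ A ∪ B := (Finset.mem_filter.mp htF).1
      have htch : ch t = ch u := (Finset.mem_filter.mp htF).2
      have hmax' : ∀ w ∈ F, w ≤ t := by
        intro w hw
        have hwch : ch w = ch u := (Finset.mem_filter.mp hw).2
        rcases comp w t (hwch.trans htch.symm) with h | h
        · exact h
        · exact (htmax w hw h).symm ▸ le_refl w
      refine ⟨t, ?_, hmax' u (Finset.mem_filter.mpr ⟨hu, rfl⟩), htch⟩
      refine Finset.mem_filter.mpr ⟨htAB, ?_⟩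
      intro w hw hwch
      exact hmax' w (Finset.mem_filter.mpr ⟨hw, hwch.trans htch⟩)
    -- T is an antichain
    have hTac : IsAC E T := by
      intro t ht t' ht' hne hlt
      have h1 := (Finset.mem_filter.mp ht).2
      have h2 := (Finset.mem_filter.mp ht').2
      have htAB := (Finset.mem_filter.mp ht).1
      have ht'AB := (Finset.mem_filter.mp ht').1
      have hltle : t ≤ t' := hlt
      by_cases hch : ch t = ch t'
      · have : t' ≤ t := h1 t' ht'AB hch.symm
        exact hne (le_antisymm hltle this)
      · rcases Finset.mem_union.mp htAB with htA | htB
        · rcases Finset.mem_union.mp ht'AB with ht'A | ht'B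
          · exact hFA.1 t htA t' ht'A hne hlt
          · obtain ⟨b, hbB, hbch⟩ := hAB t htA
            have hbt : b ≤ t := h1 b (Finset.mem_union_right _ hbB) hbch
            have hbne : b ≠ t' := by
              intro h; subst h; exact hch (hbch.symm)
            exact hFB.1 b hbB t' ht'B hbne (hbt.trans hltle)
        · rcases Finset.mem_union.mp ht'AB with ht'A | ht'B
          · obtain ⟨a, haA, hach⟩ := hBA t htB
            have hat : a ≤ t := h1 a (Finset.mem_union_left _ haA) hach
            have hane : a ≠ t' := by
              intro h; subst h; exact hch (hach.symm)
            exact hFA.1 a haA t' ht'A hane (hat.trans hltle)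
          · exact hFB.1 t htB t' ht'B hne hlt
    -- ch is injective on T
    have hchinjT : ∀ t ∈ T, ∀ t' ∈ T, ch t = ch t' → t = t' := by
      intro t ht t' ht' h
      have h1 := (Finset.mem_filter.mp ht).2
      have h2 := (Finset.mem_filter.mp ht').2
      have := h2 t (Finset.mem_filter.mp ht).1 h
      have := h1 t' (Finset.mem_filter.mp ht').1 h.symm
      exact le_antisymm ‹t ≤ t'› ‹t' ≤ t›
    -- T.image ch = A.image ch
    have hTimg : T.image ch = A.image ch := by
      apply Finset.Subset.antisymm
      · intro c hc
        obtain ⟨t, ht, rfl⟩ := Finset.mem_image.mp hc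
        rcases Finset.mem_union.mp (Finset.mem_filter.mp ht).1 with h | h
        · exact Finset.mem_image_of_mem ch h
        · rw [himg]; exact Finset.mem_image_of_mem ch h
      · intro c hc
        obtain ⟨a, ha, rfl⟩ := Finset.mem_image.mp hc
        obtain ⟨t, htT, _, htch⟩ := hfiber a (Finset.mem_union_left _ ha)
        exact Finset.mem_image.mpr ⟨t, htT, htch⟩
    have hTcard : T.card = A.card := by
      have h1 : T.card = (T.image ch).card :=
        (Finset.card_image_of_injOn (fun t ht t' ht' h => hchinjT t ht t' ht' h)).symm
      have h2 : (A.image ch).card = A.card :=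
        Finset.card_image_of_injOn (fun a ha a' ha' h => chinj A hFA.1 a ha a' ha' h)
      rw [h1, hTimg, h2]
    -- T dominates A
    have hDom : Dom E T A := by
      refine ⟨hTcard, ?_⟩
      intro t ht
      rcases Finset.mem_union.mp (Finset.mem_filter.mp ht).1 with h | h
      · exact ⟨t, h, ReflTransGen.refl⟩
      · obtain ⟨a, haA, hach⟩ := hBA t h
        have : a ≤ t := (Finset.mem_filter.mp ht).2 a (Finset.mem_union_left _ haA) hach
        exact ⟨a, haA, this⟩
    by_cases hTA : T = A
    · exact hTA
    · exact absurd hDom (hFA.2 T hTac hTA)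
  -- the image map is injective on frontier antichains
  have hinj : Set.InjOn (fun A : Finset V => A.image ch) {A : Finset V | Frontier E A} := by
    intro A hA B hB h
    have h1 := key A B hA hB h
    have h2 := key B A hB hA h.symm
    rw [Finset.union_comm B A] at h2
    exact h1.symm.trans h2
  -- count: images are subsets of P
  have hsub : ((fun A : Finset V => A.image ch) '' {A : Finset V | Frontier E A}) ⊆ (↑P.powerset : Set (Finset (Finset V))) := by
    rintro _ ⟨A, _, rfl⟩
    simp only [Finset.coe_powerset, Set.mem_preimage, Set.mem_powerset_iff]
    intro c hc
    obtain ⟨a, _, rfl⟩ := Finset.mem_image.mp (by exact_mod_cast hc)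
    exact_mod_cast hch1 a
  calc {A : Finset V | Frontier E A}.ncard
      = ((fun A : Finset V => A.image ch) '' {A : Finset V | Frontier E A}).ncard :=
        (Set.ncard_image_of_injOn hinj).symm
    _ ≤ (↑P.powerset : Set (Finset (Finset V))).ncard :=
        Set.ncard_le_ncard hsub P.powerset.finite_toSet
    _ = P.powerset.card := Set.ncard_coe_finset _
    _ = 2 ^ P.card := Finset.card_powerset P
    _ ≤ 2 ^ k := Nat.pow_le_pow_right (by norm_num) hPcard
end

section
/- Let G be a DAG with topological order v_1,...,v_n and G_i = G[{v_1,...,v_i}]. Every frontier antichain A of G_i is either of the form A' ∪ {v_i} for a frontier antichain A' of G_{i-1} not reaching v_i, or A itself is a frontier antichain of G_{i-1}. -/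
open Relation

lemma mono_le {n : ℕ} {E : Fin n → Fin n → Prop} (hE : Topo E) (j : ℕ) {a b : Fin n}
    (h : ReflTransGen (Erest E j) a b) : (a : ℕ) ≤ (b : ℕ) := by
  induction h with
  | refl => exact le_refl _
  | tail _ h ih => exact ih.trans (le_of_lt (hE _ _ h.1))

lemma lift_path {n : ℕ} {E : Fin n → Fin n → Prop} (i : ℕ) {a b : Fin n}
    (h : ReflTransGen (Erest E i) a b) : ReflTransGen (Erest E (i+1)) a b :=
  ReflTransGen.mono (p := Erest E (i+1)) (fun _ _ hp => ⟨hp.1, hp.2.1.trans (Nat.lt_succ_self i), hp.2.2.trans (Nat.lt_succ_self i)⟩) _ _ h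

lemma reduce_path {n : ℕ} {E : Fin n → Fin n → Prop} (hE : Topo E) (i : ℕ) {a b : Fin n}
    (hb : (b : ℕ) < i) (h : ReflTransGen (Erest E (i+1)) a b) :
    ReflTransGen (Erest E i) a b := by
  induction h using ReflTransGen.head_induction_on with
  | refl => exact .refl
  | head h tl ih =>
      have hc : (_ : ℕ) < i := lt_of_le_of_lt (mono_le hE (i+1) tl) hb
      exact ReflTransGen.head ⟨h.1, (hE _ _ h.1).trans hc, hc⟩ ih

lemma sink_eq {n : ℕ} {E : Fin n → Fin n → Prop} (hE : Topo E) (i : ℕ) (hi : i < n) {b : Fin n}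
    (h : ReflTransGen (Erest E (i+1)) ⟨i, hi⟩ b) : b = ⟨i, hi⟩ := by
  cases h.cases_head with
  | inl h => exact h.symm
  | inr h =>
      obtain ⟨c, hc, _⟩ := h
      exact absurd hc.2.2 (by simpa using Nat.not_lt.mpr (hE _ _ hc.1))

/-- every frontier antichain of `G_{i+1}` either consists of a frontier
antichain of `G_i` not reaching `v_i` together with `v_i`, or is itself a frontier
antichain of `G_i`. -/
theorem frontier_dichotomy {n : ℕ} (E : Fin n → Fin n → Prop) (hE : Topo E)
    (i : ℕ) (hi : i < n) (A : Finset (Fin n))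
    (hA : FrontierIn E (i + 1) A) :
    ((⟨i, hi⟩ : Fin n) ∈ A ∧ FrontierIn E i (A.erase ⟨i, hi⟩) ∧
      ∀ a ∈ A.erase ⟨i, hi⟩, ¬ ReflTransGen (Erest E (i + 1)) a ⟨i, hi⟩) ∨
    ((⟨i, hi⟩ : Fin n) ∉ A ∧ FrontierIn E i A) := by
  set vi : Fin n := ⟨i, hi⟩ with hvi
  obtain ⟨hbd, hac, hfr⟩ := hA
  have hlt_of_ne : ∀ a ∈ A, a ≠ vi → (a : ℕ) < i := by
    intro a ha hane
    have := hbd a ha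
    rcases Nat.lt_succ_iff_lt_or_eq.mp this with h | h
    · exact h
    · exact absurd (Fin.ext h) hane
  by_cases hmem : vi ∈ A
  · left
    refine ⟨hmem, ⟨?_, ?_, ?_⟩, ?_⟩
    · intro a ha
      exact hlt_of_ne a (Finset.mem_of_mem_erase ha) (Finset.ne_of_mem_erase ha)
    · intro a ha b hb hne hp
      exact hac a (Finset.mem_of_mem_erase ha) b (Finset.mem_of_mem_erase hb) hne
        (lift_path i hp)
    · intro B hBlt hBac hBne ⟨hBcard, hBdom⟩
      have hviB : vi ∉ B := fun h => lt_irrefl i (hBlt vi h)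
      refine hfr (insert vi B) ?_ ?_ ?_ ⟨?_, ?_⟩
      · intro b hb
        rcases Finset.mem_insert.mp hb with h | h
        · rw [h]; exact Nat.lt_succ_self i
        · exact (hBlt b h).trans (Nat.lt_succ_self i)
      · intro a ha b hb hne hp
        rcases Finset.mem_insert.mp ha with ha' | ha' <;>
          rcases Finset.mem_insert.mp hb with hb' | hb'
        · exact hne (ha'.trans hb'.symm)
        · subst ha'
          have := sink_eq hE i hi hp
          subst this
          exact lt_irrefl i (hBlt _ hb')
        · subst hb'
          obtain ⟨a', ha', hpa'⟩ := hBdom a ha'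
          exact hac a' (Finset.mem_of_mem_erase ha') vi hmem (Finset.ne_of_mem_erase ha')
            ((lift_path i hpa').trans hp)
        · exact hBac a ha' b hb' hne (reduce_path hE i (hBlt b hb') hp)
      · intro h
        apply hBne
        rw [← Finset.erase_insert hviB, h]
      · rw [Finset.card_insert_of_notMem hviB, hBcard, Finset.card_erase_add_one hmem]
      · intro b hb
        rcases Finset.mem_insert.mp hb with h | h
        · exact ⟨vi, hmem, h ▸ ReflTransGen.refl⟩
        · obtain ⟨a', ha', hpa'⟩ := hBdom b h
          exact ⟨a', Finset.mem_of_mem_erase ha', lift_path i hpa'⟩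
    · intro a ha
      exact hac a (Finset.mem_of_mem_erase ha) vi hmem (Finset.ne_of_mem_erase ha)
  · right
    have hAlt : ∀ a ∈ A, (a : ℕ) < i := fun a ha =>
      hlt_of_ne a ha (fun h => hmem (h ▸ ha))
    refine ⟨hmem, hAlt, ?_, ?_⟩
    · intro a ha b hb hne hp
      exact hac a ha b hb hne (lift_path i hp)
    · intro B hBlt hBac hBne ⟨hBcard, hBdom⟩
      refine hfr B (fun b hb => (hBlt b hb).trans (Nat.lt_succ_self i)) ?_ hBne ⟨hBcard, ?_⟩
      · intro a ha b hb hne hp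
        exact hBac a ha b hb hne (reduce_path hE i (hBlt b hb) hp)
      · intro b hb
        obtain ⟨a, ha, hpa⟩ := hBdom b hb
        exact ⟨a, ha, lift_path i hpa⟩
end

section
/- Let G be a DAG with topological order v_1,...,v_n and G_i = G[{v_1,...,v_i}]. A frontier antichain A of G_{i-1} is a frontier antichain of G_i if and only if A is not dominated in G_i by any frontier antichain of G_i containing v_i. -/
open Relation

section Aux

variable {n : ℕ} {E : Fin n → Fin n → Prop}

lemma reach_le (hE : Topo E) {j : ℕ} {a b : Fin n}
    (h : ReflTransGen (Erest E j) a b) : (a : ℕ) ≤ (b : ℕ) := by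
  induction h with
  | refl => exact le_refl _
  | tail h' e ih => exact ih.trans (le_of_lt (hE _ _ e.1))

lemma reach_mono {i : ℕ} {a b : Fin n}
    (h : ReflTransGen (Erest E i) a b) : ReflTransGen (Erest E (i + 1)) a b :=
  ReflTransGen.mono (r := Erest E i) (p := Erest E (i + 1))
    (fun _ _ h => ⟨h.1, Nat.lt_succ_of_lt h.2.1, Nat.lt_succ_of_lt h.2.2⟩) a b h

lemma reach_restrict (hE : Topo E) {i : ℕ} {a b : Fin n}
    (h : ReflTransGen (Erest E (i + 1)) a b) (hb : (b : ℕ) < i) :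
    ReflTransGen (Erest E i) a b := by
  induction h with
  | refl => exact ReflTransGen.refl
  | @tail c d h' e ih =>
    have hc : (c : ℕ) < i := lt_trans (hE _ _ e.1) hb
    exact (ih hc).tail ⟨e.1, hc, hb⟩

lemma dom_refl {V : Type*} {E' : V → V → Prop} (B : Finset V) : Dom E' B B :=
  ⟨rfl, fun b hb => ⟨b, hb, ReflTransGen.refl⟩⟩

lemma dom_trans {V : Type*} {E' : V → V → Prop} {C B A : Finset V}
    (h1 : Dom E' C B) (h2 : Dom E' B A) : Dom E' C A := by
  refine ⟨h1.1.trans h2.1, fun c hc => ?_⟩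
  obtain ⟨b, hb, hbc⟩ := h1.2 c hc
  obtain ⟨a, ha, hab⟩ := h2.2 b hb
  exact ⟨a, ha, hab.trans hbc⟩

lemma dom_antisymm (hE : Topo E) {j : ℕ} {A B : Finset (Fin n)}
    (hA : IsAC (Erest E j) A) (hB : IsAC (Erest E j) B)
    (h1 : Dom (Erest E j) B A) (h2 : Dom (Erest E j) A B) : A = B := by
  have hsub : B ⊆ A := by
    intro b hb
    obtain ⟨a, ha, hab⟩ := h1.2 b hb
    obtain ⟨b', hb', hb'a⟩ := h2.2 a ha
    have hbb : b' = b := by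
      by_contra hne
      exact hB b' hb' b hb hne (hb'a.trans hab)
    subst hbb
    have hab2 : a = b' := Fin.ext (le_antisymm (reach_le hE hab) (reach_le hE hb'a))
    rwa [hab2] at ha
  exact (Finset.eq_of_subset_of_card_le hsub h1.1.ge).symm

/-- Strict domination between bounded antichains of `G_j`. -/
def SDomIn (E : Fin n → Fin n → Prop) (j : ℕ) (B A : Finset (Fin n)) : Prop :=
  (∀ b ∈ B, (b : ℕ) < j) ∧ IsAC (Erest E j) B ∧ IsAC (Erest E j) A ∧
    Dom (Erest E j) B A ∧ B ≠ A

lemma sdom_wf (hE : Topo E) (j : ℕ) : WellFounded (SDomIn E j) := by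
  have ht : IsTrans (Finset (Fin n)) (SDomIn E j) := by
    constructor
    rintro C B A ⟨hCb, hCac, hBac, hCB, hCBne⟩ ⟨hBb, _, hAac, hBA, hBAne⟩
    refine ⟨hCb, hCac, hAac, dom_trans hCB hBA, ?_⟩
    rintro rfl
    exact hBAne (dom_antisymm hE hAac hBac hBA hCB).symm
  have hi : IsIrrefl (Finset (Fin n)) (SDomIn E j) :=
    ⟨fun a h => h.2.2.2.2 rfl⟩
  exact Finite.wellFounded_of_trans_of_irrefl _

lemma exists_frontier_dom (hE : Topo E) (j : ℕ) (B : Finset (Fin n))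
    (hBb : ∀ b ∈ B, (b : ℕ) < j) (hBac : IsAC (Erest E j) B) :
    ∃ C, FrontierIn E j C ∧ Dom (Erest E j) C B := by
  induction B using (sdom_wf hE j).induction with
  | _ B ih =>
  by_cases hF : FrontierIn E j B
  · exact ⟨B, hF, dom_refl B⟩
  · rw [FrontierIn] at hF
    push_neg at hF
    obtain ⟨B', hB'b, hB'ac, hB'ne, hB'dom⟩ := hF hBb hBac
    obtain ⟨C, hC, hCB'⟩ := ih B' ⟨hB'b, hB'ac, hBac, hB'dom, hB'ne⟩ hB'b hB'ac
    exact ⟨C, hC, dom_trans hCB' hB'dom⟩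

end Aux

/-- a frontier antichain of `G_i` remains frontier in `G_{i+1}` iff it is
not dominated (in `G_{i+1}`) by any frontier antichain of `G_{i+1}` containing `v_i`. -/
theorem type2_characterization {n : ℕ} (E : Fin n → Fin n → Prop) (hE : Topo E)
    (i : ℕ) (hi : i < n) (A : Finset (Fin n)) (hA : FrontierIn E i A) :
    (FrontierIn E (i + 1) A ↔
      ∀ B : Finset (Fin n), FrontierIn E (i + 1) B → (⟨i, hi⟩ : Fin n) ∈ B →
        ¬ Dom (Erest E (i + 1)) B A) := by
  have hAb1 : ∀ a ∈ A, (a : ℕ) < i + 1 := fun a ha => Nat.lt_succ_of_lt (hA.1 a ha)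
  have hAac' : IsAC (Erest E (i + 1)) A := fun a ha b hb hne hr =>
    hA.2.1 a ha b hb hne (reach_restrict hE hr (hA.1 b hb))
  have hvA : (⟨i, hi⟩ : Fin n) ∉ A := fun hmem => lt_irrefl i (hA.1 _ hmem)
  constructor
  · intro hF B hB hvB
    have hne : B ≠ A := fun h => hvA (h ▸ hvB)
    exact hF.2.2 B hB.1 hB.2.1 hne
  · intro hyp
    refine ⟨hAb1, hAac', ?_⟩
    intro B hBb hBac hne hdom
    obtain ⟨C, hCfr, hCB⟩ := exists_frontier_dom hE (i + 1) B hBb hBac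
    have hCA : Dom (Erest E (i + 1)) C A := dom_trans hCB hdom
    by_cases hvC : (⟨i, hi⟩ : Fin n) ∈ C
    · exact hyp C hCfr hvC hCA
    · have hCb : ∀ c ∈ C, (c : ℕ) < i := by
        intro c hc
        have h1 : (c : ℕ) < i + 1 := hCfr.1 c hc
        rcases Nat.lt_succ_iff_lt_or_eq.mp h1 with h | h
        · exact h
        · exact absurd (Fin.ext h : c = ⟨i, hi⟩) (fun e => hvC (e ▸ hc))
      have hCac : IsAC (Erest E i) C := fun a ha b hb hne' hr =>
        hCfr.2.1 a ha b hb hne' (reach_mono hr)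
      have hCAi : Dom (Erest E i) C A := by
        refine ⟨hCA.1, fun c hc => ?_⟩
        obtain ⟨a, ha, har⟩ := hCA.2 c hc
        exact ⟨a, ha, reach_restrict hE har (hCb c hc)⟩
      by_cases hCeq : C = A
      · subst hCeq
        exact hne (dom_antisymm hE hAac' hBac hdom hCB).symm
      · exact hA.2.2 C hCb hCac hCeq hCAi
end
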